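/- Let f : ℝ^d → ℝ be differentiable with L-Lipschitz gradient, let δ > 0, and define the δ-smoothed function f^δ(x) = (1/vol(B(0,δ))) ∫_{B(0,δ)} f(x + w) dw, where B(0,δ) is the closed Euclidean ball of radius δ. Then f^δ is differentiable and ‖∇f^δ(x) − ∇f(x)‖ ≤ Lδ for every x ∈ ℝ^d. -/

import Mathlib

open MeasureTheory Metric

/-- The `δ`-smoothed version of a function with `L`-Lipschitz gradient is differentiable,
and its gradient is within `Lδ` of the original gradient. -/
theorem smoothed_gradient_close {d : ℕ}
    (f : EuclideanSpace ℝ (Fin d) → ℝ) (L δ : ℝ) (hδ : 0 < δ) (hL : 0 ≤ L)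
    (hf : Differentiable ℝ f)
    (hlip : ∀ x y, ‖gradient f x - gradient f y‖ ≤ L * ‖x - y‖)
    (fδ : EuclideanSpace ℝ (Fin d) → ℝ)
    (hfδ : ∀ x, fδ x =
      (volume (Metric.closedBall (0 : EuclideanSpace ℝ (Fin d)) δ)).toReal⁻¹ *
        ∫ w in Metric.closedBall (0 : EuclideanSpace ℝ (Fin d)) δ, f (x + w)) :
    Differentiable ℝ fδ ∧ ∀ x, ‖gradient fδ x - gradient f x‖ ≤ L * δ := by
  have hEcont : ∀ x : EuclideanSpace ℝ (Fin d),
      Continuous (fun w : EuclideanSpace ℝ (Fin d) => x + w) :=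
    fun x => continuous_const.add continuous_id
  set B := Metric.closedBall (0 : EuclideanSpace ℝ (Fin d)) δ with hB
  set c : ℝ := (volume B).toReal⁻¹ with hc
  have hvolpos : 0 < (volume B).toReal :=
    ENNReal.toReal_pos (measure_closedBall_pos volume 0 hδ).ne'
      (isCompact_closedBall _ _).measure_lt_top.ne
  have hμfin : volume B < ⊤ := (isCompact_closedBall _ _).measure_lt_top
  have hflip : ∀ x y, ‖fderiv ℝ f x - fderiv ℝ f y‖ ≤ L * ‖x - y‖ := by
    intro x y
    rw [show fderiv ℝ f x - fderiv ℝ f y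
        = (InnerProductSpace.toDual ℝ (EuclideanSpace ℝ (Fin d)))
            (gradient f x - gradient f y) by
      simp [gradient, map_sub]]
    rw [LinearIsometryEquiv.norm_map]
    exact hlip x y
  have hcont : Continuous (fun x => fderiv ℝ f x) := by
    rcases eq_or_lt_of_le hL with h0 | hLpos
    · have : ∀ x y : EuclideanSpace ℝ (Fin d), fderiv ℝ f x = fderiv ℝ f y := by
        intro x y
        have h := hflip x y
        rw [← h0, zero_mul] at h
        rwa [norm_le_zero_iff, sub_eq_zero] at h
      exact continuous_const.congr fun x => (this (0 : EuclideanSpace ℝ (Fin d)) x)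
    · refine (LipschitzWith.of_dist_le_mul (K := ⟨L, hL⟩) ?_).continuous
      intro x y
      rw [dist_eq_norm, dist_eq_norm]; exact hflip x y
  have hFint : ∀ x : EuclideanSpace ℝ (Fin d),
      Integrable (fun w => f (x + w)) (volume.restrict B) := fun x =>
    ((hf.continuous.comp (hEcont x)).continuousOn :
      ContinuousOn (fun w => f (x + w)) B).integrableOn_compact (isCompact_closedBall _ _)
  have hF'cont : ∀ x : EuclideanSpace ℝ (Fin d),
      Continuous (fun w => fderiv ℝ f (x + w)) :=
    fun x => hcont.comp (hEcont x)
  have key : ∀ x₀ : EuclideanSpace ℝ (Fin d),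
      HasFDerivAt (fun x => ∫ w in B, f (x + w))
        (∫ w in B, fderiv ℝ f (x₀ + w)) x₀ := by
    intro x₀
    refine hasFDerivAt_integral_of_dominated_of_fderiv_le (𝕜 := ℝ) (F' := fun x w => fderiv ℝ f (x + w)) (s := Metric.ball x₀ 1) (Metric.ball_mem_nhds x₀ one_pos)
      (Filter.Eventually.of_forall fun x =>
        ((hf.continuous.comp (hEcont x)).aestronglyMeasurable :
          AEStronglyMeasurable (fun w => f (x + w)) _))
      (hFint x₀)
      ((hF'cont x₀).aestronglyMeasurable)
      (bound := fun _ => ‖fderiv ℝ f x₀‖ + L * (1 + δ)) ?_ ?_ ?_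
    · refine (ae_restrict_mem measurableSet_closedBall).mono fun w hw x hx => ?_
      have h1 : ‖fderiv ℝ f (x + w)‖
          ≤ ‖fderiv ℝ f x₀‖ + ‖fderiv ℝ f (x + w) - fderiv ℝ f x₀‖ := by
        have := norm_sub_norm_le (fderiv ℝ f (x + w)) (fderiv ℝ f x₀)
        linarith
      refine h1.trans ?_
      have h2 : ‖fderiv ℝ f (x + w) - fderiv ℝ f x₀‖ ≤ L * ‖x + w - x₀‖ := hflip _ _
      have h3 : ‖x + w - x₀‖ ≤ 1 + δ := by
        have hx' : ‖x - x₀‖ < 1 := by simpa [mem_ball_iff_norm, dist_eq_norm] using hx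
        have hw' : ‖w‖ ≤ δ := by simpa [mem_closedBall_iff_norm] using hw
        calc ‖x + w - x₀‖ = ‖(x - x₀) + w‖ := by rw [add_sub_right_comm]
          _ ≤ ‖x - x₀‖ + ‖w‖ := norm_add_le _ _
          _ ≤ 1 + δ := by linarith
      have h4 : L * ‖x + w - x₀‖ ≤ L * (1 + δ) := mul_le_mul_of_nonneg_left h3 hL
      show ‖fderiv ℝ f x₀‖ + ‖fderiv ℝ f (x + w) - fderiv ℝ f x₀‖
        ≤ ‖fderiv ℝ f x₀‖ + L * (1 + δ)
      linarith
    · exact integrableOn_const hμfin.ne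
    · refine Filter.Eventually.of_forall fun w x _ => ?_
      have := (hf (x + w)).hasFDerivAt.comp x ((hasFDerivAt_id x).add_const w)
      exact this
  have hderiv : ∀ x₀ : EuclideanSpace ℝ (Fin d),
      HasFDerivAt fδ (c • ∫ w in B, fderiv ℝ f (x₀ + w)) x₀ := by
    intro x₀
    have h := (key x₀).const_mul c
    have heq : fδ = (fun x => c * ∫ w in B, f (x + w)) := funext fun x => hfδ x
    rw [heq]
    simpa [smul_eq_mul] using h
  refine ⟨fun x => (hderiv x).differentiableAt, fun x => ?_⟩
  have hfd : fderiv ℝ fδ x = c • ∫ w in B, fderiv ℝ f (x + w) := (hderiv x).fderiv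
  have hgnorm : ‖gradient fδ x - gradient f x‖ = ‖fderiv ℝ fδ x - fderiv ℝ f x‖ := by
    rw [gradient, gradient, ← LinearIsometryEquiv.map_sub, LinearIsometryEquiv.norm_map]
  rw [hgnorm, hfd]
  have hint1 : Integrable (fun w => fderiv ℝ f (x + w)) (volume.restrict B) :=
    ((hF'cont x).continuousOn :
      ContinuousOn (fun w => fderiv ℝ f (x + w)) B).integrableOn_compact
      (isCompact_closedBall _ _)
  have hint2 : Integrable
      (fun _ : EuclideanSpace ℝ (Fin d) => fderiv ℝ f x) (volume.restrict B) :=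
    integrableOn_const (C := fderiv ℝ f x) hμfin.ne
  have hconst : fderiv ℝ f x
      = c • ∫ _ : EuclideanSpace ℝ (Fin d) in B, fderiv ℝ f x := by
    rw [setIntegral_const, measureReal_def, smul_smul, hc, inv_mul_cancel₀ hvolpos.ne', one_smul]
  calc ‖c • (∫ w in B, fderiv ℝ f (x + w)) - fderiv ℝ f x‖
      = ‖c • ∫ w in B, (fderiv ℝ f (x + w) - fderiv ℝ f x)‖ := by
        rw [integral_sub hint1 hint2, smul_sub, ← hconst]
    _ ≤ c * ‖∫ w in B, (fderiv ℝ f (x + w) - fderiv ℝ f x)‖ := by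
        rw [norm_smul, Real.norm_eq_abs, abs_of_nonneg (inv_nonneg.mpr hvolpos.le)]
    _ ≤ c * ((volume B).toReal * (L * δ)) := by
        refine mul_le_mul_of_nonneg_left ?_ (inv_nonneg.mpr hvolpos.le)
        have h : ‖∫ w in B, (fderiv ℝ f (x + w) - fderiv ℝ f x)‖
              ≤ ∫ _ : EuclideanSpace ℝ (Fin d) in B, L * δ := by
            refine norm_integral_le_of_norm_le (integrableOn_const hμfin.ne) ?_
            refine (ae_restrict_mem measurableSet_closedBall).mono fun w hw => ?_
            have hw' : ‖w‖ ≤ δ := by simpa [mem_closedBall_iff_norm] using hw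
            calc ‖fderiv ℝ f (x + w) - fderiv ℝ f x‖ ≤ L * ‖x + w - x‖ := hflip _ _
              _ = L * ‖w‖ := by rw [add_sub_cancel_left]
              _ ≤ L * δ := by gcongr
        simpa [setIntegral_const, measureReal_def, smul_eq_mul] using h
    _ = L * δ := by
        rw [hc, ← mul_assoc, inv_mul_cancel₀ hvolpos.ne', one_mul]
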